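/- Let p be a prime and let G be an abelian bi-Δ-group which is p-local and satisfies 𝔥_i G = 0 for all i ≤ k. Then for every m with 1 ≤ m ≤ p + k, the short exact sequence 0 → Z_m G → 𝔥_m G →^{p_m} 𝔥_{m−1} G → 0 splits; that is, there exists a group homomorphism r : 𝔥_m G → Z_m G whose restriction to Z_m G is the identity (equivalently, a homomorphism s : 𝔥_{m−1} G → 𝔥_m G with p_m ∘ s = id). -/

import Mathlib

universe u

section

variable (G : ℕ → Type u) [∀ n, AddCommGroup (G n)]
variable (d : ∀ n : ℕ, ℕ → (G (n + 1) →+ G n))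
variable (δ : ∀ n : ℕ, ℕ → (G n →+ G (n + 1)))

/-- The axioms of an (abelian, additively written) bi-Δ-group: a sequence of groups `G n`
with faces `d n j : G (n+1) →+ G n` (for `j ≤ n+1`) and cofaces
`δ n i : G n →+ G (n+1)` (for `i ≤ n+1`), satisfying the simplicial-type identities. -/
structure IsBiDelta : Prop where
  face_face : ∀ n i j : ℕ, i ≤ j → j ≤ n + 1 → ∀ x : G (n + 2),
    d n i (d (n + 1) (j + 1) x) = d n j (d (n + 1) i x)
  coface_coface : ∀ n i j : ℕ, j ≤ i → i ≤ n + 1 → ∀ x : G n,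
    δ (n + 1) j (δ n i x) = δ (n + 1) (i + 1) (δ n j x)
  face_coface_lt : ∀ n i j : ℕ, j ≤ i → i ≤ n + 1 → ∀ x : G (n + 1),
    d (n + 1) j (δ (n + 1) (i + 1) x) = δ n i (d n j x)
  face_coface_eq : ∀ n i : ℕ, i ≤ n + 1 → ∀ x : G n, d n i (δ n i x) = x
  face_coface_gt : ∀ n i j : ℕ, i ≤ j → j ≤ n + 1 → ∀ x : G (n + 1),
    d (n + 1) (j + 1) (δ (n + 1) i x) = δ n i (d n j x)

/-- The `n`-th Cohen group `𝔥_n G = {x ∈ G_n : d_0 x = d_1 x = ⋯ = d_n x}`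
(with `𝔥_0 G = G_0`), as a subgroup of `G n`. -/
def cohenAll : ∀ n : ℕ, AddSubgroup (G n)
  | 0 => ⊤
  | m + 1 =>
    { carrier := { x : G (m + 1) | ∀ j, j ≤ m + 1 → d m j x = d m 0 x }
      add_mem' := fun {a b} ha hb j hj => by
        simp only [Set.mem_setOf_eq] at ha hb ⊢
        rw [map_add, map_add, ha j hj, hb j hj]
      zero_mem' := fun j hj => by simp
      neg_mem' := fun {a} ha j hj => by
        simp only [Set.mem_setOf_eq] at ha ⊢
        rw [map_neg, map_neg, ha j hj] }

/-- The `n`-th Moore cycle group `Z_n G = ⋂_{j=0}^n ker d_j` (with `Z_0 G = G_0`),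
as a subgroup of `G n`. -/
def mooreAll : ∀ n : ℕ, AddSubgroup (G n)
  | 0 => ⊤
  | m + 1 =>
    { carrier := { x : G (m + 1) | ∀ j, j ≤ m + 1 → d m j x = 0 }
      add_mem' := fun {a b} ha hb j hj => by
        simp only [Set.mem_setOf_eq] at ha hb ⊢
        rw [map_add, ha j hj, hb j hj, add_zero]
      zero_mem' := fun j hj => by simp
      neg_mem' := fun {a} ha j hj => by
        simp only [Set.mem_setOf_eq] at ha ⊢
        rw [map_neg, ha j hj, neg_zero] }

/-- Iterated cofaces `d^{c(r-1)} d^{c(r-2)} ⋯ d^{c(0)}(x)` along a tuple `c` of coface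
indices (`c 0` is applied first, at level `k`). -/
def iterCoface (k : ℕ) : ∀ r : ℕ, (Fin r → ℕ) → G k → G (k + r)
  | 0, _, x => x
  | r + 1, c, x => δ (k + r) (c (Fin.last r)) (iterCoface k r (fun i => c i.castSucc) x)

open Classical in
/-- The James–Hopf homomorphism `H_{k,n} : G_k → G_n` (`n = k + r`): the sum, over all
strictly increasing tuples `0 ≤ i_1 < i_2 < ⋯ < i_{n-k} ≤ n`, of
`d^{i_{n-k}} d^{i_{n-k-1}} ⋯ d^{i_1}(x)`. -/
noncomputable def jamesHopf (k r : ℕ) (x : G k) : G (k + r) :=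
  ∑ c ∈ Finset.univ.filter (fun c : Fin r → Fin (k + r + 1) => StrictMono c),
    iterCoface G δ k r (fun i => (c i : ℕ)) x

/-- `σ_{m+1} = H_{m,m+1} = Σ_{i=0}^{m+1} d^i : G m →+ G (m+1)` (as a function). -/
def sigmaMap (m : ℕ) (x : G m) : G (m + 1) :=
  ∑ i ∈ Finset.range (m + 2), δ m i x

/-- The composite `σ_{s+r} ∘ σ_{s+r-1} ∘ ⋯ ∘ σ_{s+1} : G s → G (s+r)`. -/
def sigmaIter (s : ℕ) : ∀ r : ℕ, G s → G (s + r)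
  | 0, x => x
  | r + 1, x => sigmaMap G δ (s + r) (sigmaIter s r x)

/-- The `r`-fold iterate of the zeroth face `d_0 : G (m+r) → G m`,
i.e. `p_{m+1} ∘ p_{m+2} ∘ ⋯ ∘ p_{m+r}` on Cohen groups. -/
def dIter (m : ℕ) : ∀ r : ℕ, G (m + r) → G m
  | 0, x => x
  | r + 1, x => dIter m r (d (m + r) 0 x)

end

section AuxNum

variable {A : Type u} {B : Type u} [AddCommGroup A] [AddCommGroup B]

open Classical in
noncomputable def nInvFun (A : Type u) [AddCommGroup A] (c : ℕ) : A →+ A :=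
  if h : Function.Bijective (fun x : A => c • x) then
    (AddEquiv.ofBijective (DistribMulAction.toAddMonoidHom A c) h).symm.toAddMonoidHom
  else AddMonoidHom.id A

open Classical in
lemma smul_nInvFun {c : ℕ} (h : Function.Bijective (fun x : A => c • x)) (x : A) :
    c • nInvFun A c x = x := by
  rw [nInvFun, dif_pos h]
  exact (AddEquiv.ofBijective (DistribMulAction.toAddMonoidHom A c) h).apply_symm_apply x

lemma nInvFun_smul {c : ℕ} (h : Function.Bijective (fun x : A => c • x)) (x : A) :
    nInvFun A c (c • x) = x :=
  h.1 (smul_nInvFun h (c • x))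

lemma nInvFun_comm {c : ℕ} (f : A →+ B) (hA : Function.Bijective (fun x : A => c • x))
    (hB : Function.Bijective (fun x : B => c • x)) (x : A) :
    f (nInvFun A c x) = nInvFun B c (f x) := by
  apply hB.1
  show c • f (nInvFun A c x) = c • nInvFun B c (f x)
  rw [← map_nsmul, smul_nInvFun hA, smul_nInvFun hB]

lemma nInvFun_one (x : A) : nInvFun A 1 x = x := by
  have h : Function.Bijective (fun x : A => (1 : ℕ) • x) := by
    simp only [one_smul]; exact Function.bijective_id
  have := smul_nInvFun h x
  simpa using this

lemma bij_smul_of_not_dvd {p : ℕ}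
    (hA : ∀ q : ℕ, q.Prime → q ≠ p → Function.Bijective fun x : A => q • x) :
    ∀ c : ℕ, c ≠ 0 → ¬ p ∣ c → Function.Bijective fun x : A => c • x := by
  intro c
  induction c using Nat.strong_induction_on with
  | _ c ih =>
    intro hc0 hcp
    rcases eq_or_ne c 1 with rfl | hc1
    · simp only [one_smul]; exact Function.bijective_id
    · obtain ⟨q, hq, hqd⟩ := Nat.exists_prime_and_dvd hc1
      obtain ⟨c', rfl⟩ := hqd
      have hq2 := hq.two_le
      have hc'0 : c' ≠ 0 := by rintro rfl; simp at hc0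
      have hc' : c' < q * c' := by
        have : 1 * c' < q * c' := by
          apply Nat.mul_lt_mul_of_lt_of_le <;> omega
        simpa using this
      have hqp : q ≠ p := by rintro rfl; exact hcp ⟨c', rfl⟩
      have h1 := hA q hq hqp
      have h2 := ih c' hc' hc'0 (fun hd => hcp (hd.mul_left q))
      have : (fun x : A => (q * c') • x) = (fun x : A => q • x) ∘ (fun x : A => c' • x) := by
        funext x; simp [mul_smul]
      rw [this]
      exact h1.comp h2

/-- the scalar `(-1)^j / (j+1)!` as an endomorphism. -/
noncomputable def cHom (A : Type u) [AddCommGroup A] (j : ℕ) : A →+ A :=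
  ((-1 : ℤ) ^ j) • nInvFun A (j + 1).factorial

lemma cHom_comm {j : ℕ} (f : A →+ B)
    (hA : Function.Bijective (fun x : A => (j+1).factorial • x))
    (hB : Function.Bijective (fun x : B => (j+1).factorial • x)) (x : A) :
    f (cHom A j x) = cHom B j (f x) := by
  simp only [cHom, AddMonoidHom.smul_apply, map_zsmul, nInvFun_comm f hA hB]

lemma cHom_zero_apply (x : A) : cHom A 0 x = x := by
  simp [cHom, nInvFun_one]

lemma cHom_rec {j : ℕ}
    (h1 : Function.Bijective (fun x : A => (j+1).factorial • x))
    (h2 : Function.Bijective (fun x : A => (j+2).factorial • x)) (x : A) :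
    cHom A j x = -((j + 2) • cHom A (j+1) x) := by
  have key : nInvFun A (j+1).factorial x = (j + 2) • nInvFun A (j+2).factorial x := by
    apply h2.1
    show (j+2).factorial • nInvFun A (j+1).factorial x
        = (j+2).factorial • (j + 2) • nInvFun A (j+2).factorial x
    rw [smul_comm ((j+2).factorial) (j+2), smul_nInvFun h2]
    have : (j+2).factorial = (j+2) * (j+1).factorial := rfl
    rw [this, mul_smul, smul_nInvFun h1]
  simp only [cHom, AddMonoidHom.smul_apply, key, pow_succ]
  rw [smul_comm]
  simp [neg_smul]

end AuxNum
section AuxBD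

variable {G : ℕ → Type u} [∀ n, AddCommGroup (G n)]
variable {d : ∀ n : ℕ, ℕ → (G (n + 1) →+ G n)}
variable {δ : ∀ n : ℕ, ℕ → (G n →+ G (n + 1))}

lemma mem_cohen {n : ℕ} {x : G (n+1)} :
    x ∈ cohenAll G d (n+1) ↔ ∀ j, j ≤ n+1 → d n j x = d n 0 x := Iff.rfl

lemma mem_moore {n : ℕ} {x : G (n+1)} :
    x ∈ mooreAll G d (n+1) ↔ ∀ j, j ≤ n+1 → d n j x = 0 := Iff.rfl

lemma d0_mem_cohen (hd : IsBiDelta G d δ) : ∀ {n : ℕ} (x : G (n+1)),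
    x ∈ cohenAll G d (n+1) → d n 0 x ∈ cohenAll G d n := by
  intro n x hx
  match n with
  | 0 => exact AddSubgroup.mem_top _
  | n + 1 =>
    intro j hj
    rw [← hd.face_face n 0 j (Nat.zero_le _) hj x, hx (j+1) (by omega)]

/-- `σ` as a homomorphism. -/
def sigmaHom (G : ℕ → Type u) [∀ n, AddCommGroup (G n)]
    (δ : ∀ n : ℕ, ℕ → (G n →+ G (n + 1))) (n : ℕ) : G n →+ G (n + 1) :=
  ∑ i ∈ Finset.range (n + 2), δ n i

lemma sigmaHom_apply (n : ℕ) (x : G n) :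
    sigmaHom G δ n x = ∑ i ∈ Finset.range (n + 2), δ n i x := by
  simp [sigmaHom]

lemma d_sigma (hd : IsBiDelta G d δ) (n j : ℕ) (hj : j ≤ n + 2) (x : G (n+1))
    (hx : x ∈ cohenAll G d (n+1)) :
    d (n+1) j (sigmaHom G δ (n+1) x) = x + sigmaHom G δ n (d n 0 x) := by
  have hxm : ∀ j', j' ≤ n+1 → d n j' x = d n 0 x := hx
  have hterm : ∀ i ∈ Finset.range (n+3), d (n+1) j (δ (n+1) i x)
      = if i = j then x else δ n (if i < j then i else i - 1) (d n 0 x) := by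
    intro i hi
    rw [Finset.mem_range] at hi
    rcases lt_trichotomy i j with hij | rfl | hij
    · obtain ⟨j', rfl⟩ : ∃ j', j = j' + 1 := ⟨j - 1, by omega⟩
      rw [if_neg (by omega), if_pos hij]
      rw [hd.face_coface_gt n i j' (by omega) (by omega) x, hxm j' (by omega)]
    · rw [if_pos rfl]
      exact hd.face_coface_eq (n+1) i hj x
    · obtain ⟨i', rfl⟩ : ∃ i', i = i' + 1 := ⟨i - 1, by omega⟩
      rw [if_neg (by omega), if_neg (by omega)]
      rw [hd.face_coface_lt n i' j (by omega) (by omega) x, hxm j (by omega)]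
      norm_num
  rw [sigmaHom_apply, map_sum, Finset.sum_congr rfl hterm]
  have hjmem : j ∈ Finset.range (n+3) := Finset.mem_range.mpr (by omega)
  rw [← Finset.add_sum_erase _ _ hjmem, if_pos rfl]
  congr 1
  rw [sigmaHom_apply]
  refine Finset.sum_nbij' (i := fun i => if i < j then i else i - 1)
    (j := fun i' => if i' < j then i' else i' + 1) ?_ ?_ ?_ ?_ ?_
  · intro a ha
    rw [Finset.mem_erase, Finset.mem_range] at ha
    rw [Finset.mem_range]
    split_ifs <;> omega
  · intro b hb
    rw [Finset.mem_range] at hb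
    rw [Finset.mem_erase, Finset.mem_range]
    split_ifs <;> omega
  · intro a ha
    rw [Finset.mem_erase, Finset.mem_range] at ha
    split_ifs <;> omega
  · intro b hb
    rw [Finset.mem_range] at hb
    split_ifs <;> omega
  · intro a ha
    rw [Finset.mem_erase, Finset.mem_range] at ha
    rw [if_neg ha.1]

end AuxBD
section AuxS

variable {G : ℕ → Type u} [∀ n, AddCommGroup (G n)]
variable {d : ∀ n : ℕ, ℕ → (G (n + 1) →+ G n)}
variable {δ : ∀ n : ℕ, ℕ → (G n →+ G (n + 1))}
variable {p : ℕ}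

lemma sigma_mem_cohen (hd : IsBiDelta G d δ) (n : ℕ) (x : G (n+1))
    (hx : x ∈ cohenAll G d (n+1)) :
    sigmaHom G δ (n+1) x ∈ cohenAll G d (n+2) := by
  intro j hj
  rw [d_sigma hd n j hj x hx, d_sigma hd n 0 (by omega) x hx]

lemma cHom_mem_cohen
    (hfac : ∀ (e j : ℕ), j + 1 < p → Function.Bijective fun x : G e => (j+1).factorial • x)
    {n j : ℕ} (hj : j + 1 < p) (x : G (n+1)) (hx : x ∈ cohenAll G d (n+1)) :
    cHom (G (n+1)) j x ∈ cohenAll G d (n+1) := by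
  intro i hi
  rw [cHom_comm (d n i) (hfac _ _ hj) (hfac _ _ hj),
    cHom_comm (d n 0) (hfac _ _ hj) (hfac _ _ hj), hx i hi]

/-- The recursively defined partial sections `S^{(j)}`. -/
noncomputable def Ssec (G : ℕ → Type u) [∀ n, AddCommGroup (G n)]
    (d : ∀ n : ℕ, ℕ → (G (n + 1) →+ G n)) (δ : ∀ n : ℕ, ℕ → (G n →+ G (n + 1)))
    (k : ℕ) : ∀ _t : ℕ, ℕ → (G (k + _t) →+ G (k + _t + 1))
  | 0, _ => 0
  | t + 1, j =>
    ((cHom (G (k + t + 2)) j).comp (sigmaHom G δ (k + t + 1))) +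
    (sigmaHom G δ (k + t + 1)).comp ((Ssec G d δ k t (j+1)).comp (d (k + t) 0))

lemma Ssec_succ_apply (k t j : ℕ) (x : G (k + t + 1)) :
    Ssec G d δ k (t+1) j x = cHom (G (k + t + 2)) j (sigmaHom G δ (k + t + 1) x)
      + sigmaHom G δ (k + t + 1) (Ssec G d δ k t (j+1) (d (k + t) 0 x)) := rfl

lemma Ssec_mem (hd : IsBiDelta G d δ)
    (hfac : ∀ (e j : ℕ), j + 1 < p → Function.Bijective fun x : G e => (j+1).factorial • x)
    (k : ℕ) : ∀ t j : ℕ, j + t < p → ∀ x ∈ cohenAll G d (k + t),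
      Ssec G d δ k t j x ∈ cohenAll G d (k + t + 1) := by
  intro t
  induction t with
  | zero =>
    intro j _ x _
    show (0 : G (k+0) →+ G (k+0+1)) x ∈ _
    simpa using AddSubgroup.zero_mem _
  | succ t ih =>
    intro j hjt x hx
    rw [Ssec_succ_apply]
    apply AddSubgroup.add_mem
    · exact cHom_mem_cohen hfac (by omega)
        _ (sigma_mem_cohen hd (k + t) x hx)
    · exact sigma_mem_cohen hd (k + t) _
        (ih (j+1) (by omega) _ (d0_mem_cohen hd x hx))

lemma Ssec_inv (hd : IsBiDelta G d δ)
    (hfac : ∀ (e j : ℕ), j + 1 < p → Function.Bijective fun x : G e => (j+1).factorial • x)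
    (k : ℕ) (hk : ∀ x ∈ cohenAll G d k, x = 0) :
    ∀ t j : ℕ, j + t + 1 < p → ∀ x ∈ cohenAll G d (k + t + 1),
      d (k + t + 1) 0 (Ssec G d δ k (t+1) j x)
        = cHom (G (k + t + 1)) j x - j • Ssec G d δ k t (j+1) (d (k + t) 0 x) := by
  intro t
  induction t with
  | zero =>
    intro j hj x hx
    show d (k+1) 0 (cHom (G (k+2)) j (sigmaHom G δ (k+1) x)
        + sigmaHom G δ (k+1) (Ssec G d δ k 0 (j+1) (d k 0 x)))
      = cHom (G (k+1)) j x - j • Ssec G d δ k 0 (j+1) (d k 0 x)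
    have hz : Ssec G d δ k 0 (j+1) (d k 0 x) = 0 := rfl
    have hd0 : d k 0 x = 0 := hk _ (d0_mem_cohen hd x hx)
    rw [hz, map_zero, add_zero, smul_zero, sub_zero]
    rw [cHom_comm (d (k+1) 0) (hfac _ _ (by omega)) (hfac _ _ (by omega))]
    rw [d_sigma hd k 0 (by omega) x hx]
    rw [hd0, map_zero, add_zero]
  | succ t ih =>
    intro j hjt x hx
    have hx' : x ∈ cohenAll G d (k+t+2) := hx
    show d (k+t+2) 0 (cHom (G (k+t+3)) j (sigmaHom G δ (k+t+2) x)
        + sigmaHom G δ (k+t+2) (Ssec G d δ k (t+1) (j+1) (d (k+t+1) 0 x)))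
      = cHom (G (k+t+2)) j x - j • (id (Ssec G d δ k (t+1) (j+1) (d (k+t+1) 0 x)) : G (k+t+2))
    simp only [id_eq]
    set y := d (k + t + 1) 0 x with hy
    have hym : y ∈ cohenAll G d (k + t + 1) := d0_mem_cohen hd x hx'
    have hzmem : Ssec G d δ k (t+1) (j+1) y ∈ cohenAll G d (k + t + 2) :=
      Ssec_mem hd hfac k (t+1) (j+1) (by omega) y hym
    rw [map_add]
    rw [cHom_comm (d (k+t+2) 0) (hfac _ _ (by omega)) (hfac _ _ (by omega))]
    rw [d_sigma hd (k+t+1) 0 (by omega) x hx']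
    rw [d_sigma hd (k+t+1) 0 (by omega) _ hzmem]
    rw [ih (j+1) (by omega) y hym]
    rw [Ssec_succ_apply k t (j+1) y]
    rw [map_add, map_sub, map_nsmul]
    rw [cHom_comm (sigmaHom G δ (k+t+1)) (hfac _ _ (by omega)) (hfac _ _ (by omega))]
    set u := cHom (G (k + t + 2)) (j+1) (sigmaHom G δ (k + t + 1) y) with hu
    set v := sigmaHom G δ (k + t + 1) (Ssec G d δ k t (j+2) (d (k + t) 0 y)) with hv
    have hrec : cHom (G (k + t + 2)) j (sigmaHom G δ (k + t + 1) y)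
        = -((j + 2) • u) := cHom_rec (hfac _ _ (by omega)) (hfac _ _ (by omega)) _
    rw [hrec]
    have e1 : (j + 2) • u = j • u + 2 • u := by rw [add_nsmul]
    have e2 : (j + 1) • v = j • v + v := by rw [add_nsmul, one_nsmul]
    rw [e1, e2, smul_add, two_nsmul]
    abel

end AuxS
/-- Let `p` be a prime and `G` an abelian bi-Δ-group which is `p`-local
(multiplication by any prime `q ≠ p` is bijective on each `G n`) and satisfies
`𝔥_i G = 0` for all `i ≤ k`. Then for every `m` with `1 ≤ m ≤ p + k` (here the level is
`m + 1` with `m + 1 ≤ p + k`), the short exact sequence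
`0 → Z_m G → 𝔥_m G → 𝔥_{m-1} G → 0` splits: there is a homomorphism
`r : 𝔥_m G → Z_m G` restricting to the identity on `Z_m G`. -/
theorem stmt13 (G : ℕ → Type u) [∀ n, AddCommGroup (G n)]
    (d : ∀ n : ℕ, ℕ → (G (n + 1) →+ G n)) (δ : ∀ n : ℕ, ℕ → (G n →+ G (n + 1)))
    (h : IsBiDelta G d δ) (p k : ℕ) (hp : p.Prime)
    (hloc : ∀ q : ℕ, q.Prime → q ≠ p → ∀ n, Function.Bijective fun x : G n => q • x)
    (hvanish : ∀ i ≤ k, ∀ x ∈ cohenAll G d i, x = 0)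
    (m : ℕ) (hm : m + 1 ≤ p + k) :
    ∃ r : ↥(cohenAll G d (m + 1)) →+ ↥(mooreAll G d (m + 1)),
      ∀ x : ↥(cohenAll G d (m + 1)), (x : G (m + 1)) ∈ mooreAll G d (m + 1) →
        ((r x : ↥(mooreAll G d (m + 1))) : G (m + 1)) = (x : G (m + 1)) := by
  have hfac : ∀ (e j : ℕ), j + 1 < p →
      Function.Bijective fun x : G e => (j+1).factorial • x := by
    intro e j hj
    apply bij_smul_of_not_dvd (fun q hq hqp => hloc q hq hqp e)
    · exact (Nat.factorial_pos _).ne'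
    · rw [hp.dvd_factorial]
      omega
  by_cases hkm : m ≤ k
  · have hsub : ∀ x : G (m+1), x ∈ cohenAll G d (m+1) → x ∈ mooreAll G d (m+1) := by
      intro x hx j hj
      have h0 : d m 0 x = 0 := hvanish m hkm _ (d0_mem_cohen h x hx)
      rw [hx j hj, h0]
    exact ⟨AddMonoidHom.mk' (fun x => ⟨x.1, hsub x.1 x.2⟩) (fun a b => rfl),
      fun x _ => rfl⟩
  · push_neg at hkm
    obtain ⟨t, rfl⟩ : ∃ t, m = k + t + 1 := ⟨m - k - 1, by omega⟩
    have hk0 : ∀ x ∈ cohenAll G d k, x = 0 := hvanish k le_rfl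
    have hsmem : ∀ x ∈ cohenAll G d (k+t+1),
        Ssec G d δ k (t+1) 0 x ∈ cohenAll G d (k+t+2) :=
      fun x hx => Ssec_mem h hfac k (t+1) 0 (by omega) x hx
    have hsec : ∀ x ∈ cohenAll G d (k+t+1),
        d (k+t+1) 0 (Ssec G d δ k (t+1) 0 x) = x := by
      intro x hx
      rw [Ssec_inv h hfac k hk0 t 0 (by omega) x hx, cHom_zero_apply, zero_smul, sub_zero]
    have pf : ∀ x : ↥(cohenAll G d (k+t+1+1)),
        (x : G (k+t+1+1)) - (id (Ssec G d δ k (t+1) 0 (d (k+t+1) 0 x.1)) : G (k+t+1+1))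
          ∈ mooreAll G d (k+t+1+1) := by
      intro x j hj
      have hy : d (k+t+1) 0 x.1 ∈ cohenAll G d (k+t+1) := d0_mem_cohen h x.1 x.2
      have hsy : Ssec G d δ k (t+1) 0 (d (k+t+1) 0 x.1) ∈ cohenAll G d (k+t+2) :=
        hsmem _ hy
      rw [map_sub, id_eq, x.2 j hj, hsy j hj, hsec _ hy, sub_self]
    refine ⟨AddMonoidHom.mk' (fun x => ⟨_, pf x⟩) (fun a b => ?_), fun x hx => ?_⟩
    · apply Subtype.ext
      show ((a + b : ↥(cohenAll G d (k+t+1+1))) : G (k+t+1+1)) - _ = _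
      simp only [AddSubgroup.coe_add, map_add, id_eq]
      rw [sub_add_sub_comm]
    · show (x : G (k+t+1+1)) - _ = (x : G (k+t+1+1))
      have hx0 : d (k+t+1) 0 (x : G (k+t+1+1)) = 0 := hx 0 (Nat.zero_le _)
      rw [hx0, map_zero, id_eq, sub_zero]
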